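/- Let p be a pmf on subsets of {1,2,3}. For the TopK=2 setting, the hedged code θ_H^{jk,i} (one atom writing v_j + v_k active iff {j,k} ⊆ S, one atom writing v_i active iff i ∈ S) has strictly smaller expected symmetric-difference loss than the monosemantic code θ_M^{jk} (reconstructing S ∩ {j,k}) if and only if p_i + p_{ijk} > p_j + p_k. -/
import Mathlib


/-- Expected symmetric-difference loss of a code `f` under pmf `p` on subsets of
`{1,2,3}`; by orthonormality of concepts this equals the mean squared error. -/
def symmLoss (p : Finset (Fin 3) → ℝ) (f : Finset (Fin 3) → Finset (Fin 3)) : ℝ :=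
  ∑ S : Finset (Fin 3), p S * (((S \ f S) ∪ (f S \ S)).card : ℝ)

lemma sum8 (g : Finset (Fin 3) → ℝ) :
    ∑ S : Finset (Fin 3), g S =
      g ∅ + g {0} + g {1} + g {0,1} + g {2} + g {0,2} + g {1,2} + g {0,1,2} := by
  rw [show (Finset.univ : Finset (Finset (Fin 3))) =
      {∅, {0}, {1}, {0,1}, {2}, {0,2}, {1,2}, {0,1,2}} from by decide]
  rw [Finset.sum_insert (by decide), Finset.sum_insert (by decide),
    Finset.sum_insert (by decide), Finset.sum_insert (by decide),
    Finset.sum_insert (by decide), Finset.sum_insert (by decide),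
    Finset.sum_insert (by decide), Finset.sum_singleton]
  ring

lemma sum8' (i j k : Fin 3) (hij : i ≠ j) (hik : i ≠ k) (hjk : j ≠ k)
    (g : Finset (Fin 3) → ℝ) :
    ∑ S : Finset (Fin 3), g S =
      g ∅ + g {i} + g {j} + g {i,j} + g {k} + g {i,k} + g {j,k} + g {i,j,k} := by
  have hinj : Function.Injective ![i, j, k] := by
    intro a b h
    fin_cases a <;> fin_cases b <;> simp_all
  rw [← Equiv.sum_comp (Equiv.ofBijective _ (Finite.injective_iff_bijective.mp hinj)).finsetCongr g,
    sum8]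
  simp [Equiv.finsetCongr_apply, Finset.map_insert, Finset.map_singleton,
    Equiv.coe_toEmbedding, Equiv.ofBijective_apply, Matrix.cons_val_zero,
    Matrix.cons_val_one, Matrix.head_cons, Matrix.cons_val_two, Matrix.tail_cons]

lemma lossM_eq (p : Finset (Fin 3) → ℝ) (i j k : Fin 3)
    (hij : i ≠ j) (hik : i ≠ k) (hjk : j ≠ k) :
    symmLoss p (fun S => S ∩ ({j, k} : Finset (Fin 3))) =
      p {i} + p {i,j} + p {i,k} + p {i,j,k} := by
  have key : ∀ S : Finset (Fin 3),
      (S \ (S ∩ {j,k})) ∪ ((S ∩ {j,k}) \ S) = S \ {j,k} := by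
    intro S
    rw [Finset.sdiff_eq_empty_iff_subset.mpr Finset.inter_subset_left,
      Finset.union_empty, Finset.sdiff_inter_self_left]
  unfold symmLoss
  simp only [key]
  rw [sum8' i j k hij hik hjk]
  have e1 : (∅ : Finset (Fin 3)) \ {j,k} = ∅ := by simp
  have e2 : ({i} : Finset (Fin 3)) \ {j,k} = {i} := by
    ext x; simp only [Finset.mem_sdiff, Finset.mem_insert, Finset.mem_singleton]; aesop
  have e3 : ({j} : Finset (Fin 3)) \ {j,k} = ∅ := by
    ext x; simp only [Finset.mem_sdiff, Finset.mem_insert, Finset.mem_singleton,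
      Finset.notMem_empty]; aesop
  have e4 : ({i,j} : Finset (Fin 3)) \ {j,k} = {i} := by
    ext x; simp only [Finset.mem_sdiff, Finset.mem_insert, Finset.mem_singleton]; aesop
  have e5 : ({k} : Finset (Fin 3)) \ {j,k} = ∅ := by
    ext x; simp only [Finset.mem_sdiff, Finset.mem_insert, Finset.mem_singleton,
      Finset.notMem_empty]; aesop
  have e6 : ({i,k} : Finset (Fin 3)) \ {j,k} = {i} := by
    ext x; simp only [Finset.mem_sdiff, Finset.mem_insert, Finset.mem_singleton]; aesop
  have e7 : ({j,k} : Finset (Fin 3)) \ {j,k} = ∅ := by simp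
  have e8 : ({i,j,k} : Finset (Fin 3)) \ {j,k} = {i} := by
    ext x; simp only [Finset.mem_sdiff, Finset.mem_insert, Finset.mem_singleton]; aesop
  rw [e1, e2, e3, e4, e5, e6, e7, e8]
  simp

lemma lossH_eq (p : Finset (Fin 3) → ℝ) (i j k : Fin 3)
    (hij : i ≠ j) (hik : i ≠ k) (hjk : j ≠ k) :
    symmLoss p (fun S =>
        (if ({j, k} : Finset (Fin 3)) ⊆ S then ({j, k} : Finset (Fin 3)) else ∅) ∪
        (if i ∈ S then ({i} : Finset (Fin 3)) else ∅)) =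
      p {j} + p {k} + p {i,j} + p {i,k} := by
  have hji := hij.symm; have hki := hik.symm; have hkj := hjk.symm
  unfold symmLoss
  rw [sum8' i j k hij hik hjk]
  simp only [Finset.insert_subset_iff, Finset.singleton_subset_iff,
    Finset.mem_insert, Finset.mem_singleton, Finset.notMem_empty,
    hij, hik, hjk, hji, hki, hkj, if_true, if_false]
  have f1 : ({i,j} : Finset (Fin 3)) \ {i} = {j} := by
    ext x; simp only [Finset.mem_sdiff, Finset.mem_insert, Finset.mem_singleton]; aesop
  have f2 : ({i} : Finset (Fin 3)) \ {i,j} = ∅ := by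
    ext x; simp only [Finset.mem_sdiff, Finset.mem_insert, Finset.mem_singleton,
      Finset.notMem_empty]; aesop
  have f3 : ({i,k} : Finset (Fin 3)) \ {i} = {k} := by
    ext x; simp only [Finset.mem_sdiff, Finset.mem_insert, Finset.mem_singleton]; aesop
  have f4 : ({i} : Finset (Fin 3)) \ {i,k} = ∅ := by
    ext x; simp only [Finset.mem_sdiff, Finset.mem_insert, Finset.mem_singleton,
      Finset.notMem_empty]; aesop
  have f5 : ({i,j,k} : Finset (Fin 3)) \ (({j,k} : Finset (Fin 3)) ∪ {i}) = ∅ := by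
    ext x; simp only [Finset.mem_sdiff, Finset.mem_union, Finset.mem_insert,
      Finset.mem_singleton, Finset.notMem_empty]; aesop
  have f6 : (({j,k} : Finset (Fin 3)) ∪ {i}) \ ({i,j,k} : Finset (Fin 3)) = ∅ := by
    ext x; simp only [Finset.mem_sdiff, Finset.mem_union, Finset.mem_insert,
      Finset.mem_singleton, Finset.notMem_empty]; aesop
  simp only [false_and, true_and, and_false, and_true, or_false, false_or, or_true,
    true_or, if_true, if_false, Finset.union_empty, Finset.empty_union,
    Finset.sdiff_self, Finset.sdiff_empty, Finset.empty_sdiff, f1, f2, f3, f4, f5, f6,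
    Finset.card_empty, Finset.card_singleton, Nat.cast_zero, Nat.cast_one,
    mul_zero, mul_one]
  ring


/-- in the three-concept DGP with TopK = 2, the hedged code
`θ_H^{jk,i}` (joint atom `{j,k}` active iff `{j,k} ⊆ S`, plus atom `{i}` active
iff `i ∈ S`) has strictly smaller loss than the monosemantic code `θ_M^{jk}`
(reconstructing `S ∩ {j,k}`) iff `p_i + p_{ijk} > p_j + p_k`. -/
theorem hedging_condition_K2_jk_i
    (p : Finset (Fin 3) → ℝ) (hp0 : ∀ S, 0 ≤ p S)
    (hp1 : ∑ S : Finset (Fin 3), p S = 1)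
    (i j k : Fin 3) (hij : i ≠ j) (hik : i ≠ k) (hjk : j ≠ k) :
    symmLoss p (fun S =>
        (if ({j, k} : Finset (Fin 3)) ⊆ S then ({j, k} : Finset (Fin 3)) else ∅) ∪
        (if i ∈ S then ({i} : Finset (Fin 3)) else ∅)) <
      symmLoss p (fun S => S ∩ ({j, k} : Finset (Fin 3))) ↔
    p {i} + p {i, j, k} > p {j} + p {k} := by
  rw [lossM_eq p i j k hij hik hjk, lossH_eq p i j k hij hik hjk]
  constructor <;> intro h <;> linarith
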